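/- For any ⟨n, ℓ, Δ, r⟩-uncoded system (n workers, each assigned an ordered list of ℓ distinct symbols out of a total of Δ symbols, with each symbol appearing exactly r times across workers, so nℓ = Δr), the worst-case recovery number Q satisfies Q ≥ Δr - (r/2)(ℓ+1) + 1. -/
import Mathlib


/-- Lower bound `Q ≥ Δr - (r/2)(ℓ+1) + 1` for any `⟨n, ℓ, Δ, r⟩`-uncoded system:
`n` workers each hold an ordered list of `ℓ` distinct symbols out of `Δ`, each symbol appearing
exactly `r` times, `nℓ = Δr`.  `Q` is any number such that every processing pattern (prefix
`t w ≤ ℓ` per worker) with at least `Q` total processed symbols covers every symbol. -/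
theorem stmt2 (n ℓ Δ r : ℕ) (hΔ : 0 < Δ) (hℓ : 0 < ℓ) (hℓΔ : ℓ ≤ Δ) (hr : 0 < r)
    (hbal : n * ℓ = Δ * r)
    (A : Fin n → Fin ℓ → Fin Δ)
    (hinj : ∀ w, Function.Injective (A w))
    (hrep : ∀ s : Fin Δ,
      (Finset.univ.filter (fun wp : Fin n × Fin ℓ => A wp.1 wp.2 = s)).card = r)
    (Q : ℕ)
    (hQ : ∀ t : Fin n → ℕ, (∀ w, t w ≤ ℓ) → Q ≤ ∑ w, t w →
      ∀ s : Fin Δ, ∃ w : Fin n, ∃ p : Fin ℓ, A w p = s ∧ (p : ℕ) < t w) :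
    (Q : ℚ) ≥ (Δ : ℚ) * r - ((r : ℚ) / 2) * (ℓ + 1) + 1 := by
  classical
  set D : Fin Δ → ℕ := fun s =>
    ∑ wp ∈ Finset.univ.filter (fun wp : Fin n × Fin ℓ => A wp.1 wp.2 = s), (ℓ - (wp.2 : ℕ))
    with hD
  -- total of D over all symbols
  have htot : ∑ s, D s = ∑ wp : Fin n × Fin ℓ, (ℓ - (wp.2 : ℕ)) := by
    exact Finset.sum_fiberwise_of_maps_to (fun x _ => Finset.mem_univ _) _
  have hS : 2 * ∑ p : Fin ℓ, (ℓ - (p : ℕ)) = ℓ * (ℓ + 1) := by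
    rw [Fin.sum_univ_eq_sum_range]
    have h1 : ∑ k ∈ Finset.range ℓ, (ℓ - k) = ∑ k ∈ Finset.range ℓ, (k + 1) := by
      rw [← Finset.sum_range_reflect (fun k => ℓ - k) ℓ]
      exact Finset.sum_congr rfl fun j hj => by
        simp only [Finset.mem_range] at hj; omega
    rw [h1]
    have h2 : ∑ i ∈ Finset.range (ℓ + 1), i = ∑ k ∈ Finset.range ℓ, (k + 1) := by
      rw [Finset.sum_range_succ']; simp
    have h3 := Finset.sum_range_id_mul_two (ℓ + 1)
    rw [h2] at h3
    simp only [Nat.add_sub_cancel] at h3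
    rw [mul_comm ℓ (ℓ + 1), ← h3]
    ring
  have h2 : ∑ wp : Fin n × Fin ℓ, (ℓ - (wp.2 : ℕ)) = n * ∑ p : Fin ℓ, (ℓ - (p : ℕ)) := by
    rw [Fintype.sum_prod_type]
    simp [Finset.sum_const, Finset.card_univ, mul_comm]
  have h2tot : 2 * ∑ s, D s = Δ * (r * (ℓ + 1)) := by
    rw [htot, h2, ← mul_assoc, mul_comm 2 n, mul_assoc, hS, ← mul_assoc, hbal]
    ring
  -- pick a symbol with small D
  have hex : ∃ s : Fin Δ, 2 * D s ≤ r * (ℓ + 1) := by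
    by_contra hcon
    push_neg at hcon
    have hge : ∀ s : Fin Δ, s ∈ Finset.univ → r * (ℓ + 1) + 1 ≤ 2 * D s :=
      fun s _ => hcon s
    have hsum := Finset.card_nsmul_le_sum Finset.univ (fun s => 2 * D s) _ hge
    rw [Finset.card_univ, Fintype.card_fin, smul_eq_mul, ← Finset.mul_sum, h2tot] at hsum
    rw [mul_add, mul_one] at hsum
    linarith
  obtain ⟨s, h2D⟩ := hex
  -- pattern stopping just before s
  set e : Fin n → ℕ := fun w =>
    ∑ p ∈ Finset.univ.filter (fun p : Fin ℓ => A w p = s), (ℓ - (p : ℕ)) with he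
  have hcard : ∀ w, (Finset.univ.filter (fun p : Fin ℓ => A w p = s)).card ≤ 1 := by
    intro w
    refine Finset.card_le_one.2 ?_
    intro a ha b hb
    simp only [Finset.mem_filter] at ha hb
    exact hinj w (ha.2.trans hb.2.symm)
  have he_le : ∀ w, e w ≤ ℓ := by
    intro w
    calc e w ≤ (Finset.univ.filter (fun p : Fin ℓ => A w p = s)).card • ℓ :=
          Finset.sum_le_card_nsmul _ _ _ (fun p _ => Nat.sub_le _ _)
      _ ≤ 1 * ℓ := by
          rw [smul_eq_mul]; exact Nat.mul_le_mul_right _ (hcard w)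
      _ = ℓ := one_mul ℓ
  have hDs : ∑ w, e w = D s := by
    simp only [he, hD, Finset.sum_filter, Fintype.sum_prod_type]
  set t : Fin n → ℕ := fun w => ℓ - e w with htdef
  have ht1 : ∀ w, t w ≤ ℓ := fun w => Nat.sub_le _ _
  have hsum : ∑ w, t w + D s = Δ * r := by
    have h1 : ∑ w, t w + ∑ w, e w = ∑ w : Fin n, ℓ := by
      rw [← Finset.sum_add_distrib]
      exact Finset.sum_congr rfl fun w _ => Nat.sub_add_cancel (he_le w)
    rw [hDs] at h1
    rw [h1]
    simp [Finset.sum_const, Finset.card_univ, hbal]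
  have hDle : D s ≤ Δ * r := by omega
  -- this pattern does not cover s
  have hnot : ¬ ∃ w : Fin n, ∃ p : Fin ℓ, A w p = s ∧ (p : ℕ) < t w := by
    rintro ⟨w, p, hp, hplt⟩
    have hfil : Finset.univ.filter (fun q : Fin ℓ => A w q = s) = {p} := by
      ext q
      simp only [Finset.mem_filter, Finset.mem_univ, true_and, Finset.mem_singleton]
      constructor
      · intro hq; exact hinj w (hq.trans hp.symm)
      · rintro rfl; exact hp
    have : e w = ℓ - (p : ℕ) := by rw [he]; simp [hfil]
    have hpl : (p : ℕ) < ℓ := p.isLt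
    simp only [htdef] at hplt
    omega
  have hQlt : ∑ w, t w < Q := by
    by_contra hle
    push_neg at hle
    exact hnot (hQ t ht1 hle s)
  -- conclude
  have hQge : Δ * r - D s + 1 ≤ Q := by omega
  have hc1 : ((Δ * r - D s + 1 : ℕ) : ℚ) = (Δ : ℚ) * r - D s + 1 := by
    push_cast [Nat.cast_sub hDle]
    ring
  have hc2 : (2 : ℚ) * D s ≤ (r : ℚ) * (ℓ + 1) := by
    exact_mod_cast h2D
  have hc3 : ((Δ * r - D s + 1 : ℕ) : ℚ) ≤ (Q : ℚ) := by exact_mod_cast hQge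
  rw [hc1] at hc3
  linarith
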